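/- Let (M,F) be a singular Riemannian foliation with closed leaves on a compact, simply-connected Riemannian manifold, and assume the principal part M*_prin of the leaf space is simply-connected. Fix principal leaves L₀ and L of F and two paths γ₀, γ₁: I → M*_prin connecting L₀* to L*. Then the homeomorphism h_{γ₀}: L₀ → L is homotopic to h_{γ₁}: L₀ → L. -/

import Mathlib

open scoped Manifold unitInterval
open Topology

noncomputable section

/-- A singular foliation on a topological space `M`: a partition of `M` into connected
leaves, together with the dimension of the leaf through each point.  This records the
topological content of a singular Riemannian foliation (the metric conditions are part of
the ambient geometric setting). -/
structure SFoliation (M : Type*) [TopologicalSpace M] where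
  rel : M → M → Prop
  iseqv : Equivalence rel
  leafDim : M → ℕ
  leafDim_congr : ∀ {p q : M}, rel p q → leafDim p = leafDim q
  leaf_connected : ∀ p : M, IsConnected {q : M | rel p q}

namespace SFoliation

variable {M : Type*} [TopologicalSpace M] (F : SFoliation M)

/-- The leaf through `p`. -/
def leaf (p : M) : Set M := {q : M | F.rel p q}

lemma mem_leaf_self (p : M) : p ∈ F.leaf p := F.iseqv.refl p

/-- The setoid given by the partition into leaves. -/
def toSetoid : Setoid M := ⟨F.rel, F.iseqv⟩

/-- The leaf space `M/F`, with the quotient topology. -/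
def LeafSpace : Type _ := Quotient F.toSetoid

instance : TopologicalSpace F.LeafSpace := instTopologicalSpaceQuotient

/-- The leaf projection map. -/
def proj (p : M) : F.LeafSpace := Quotient.mk F.toSetoid p

lemma continuous_proj : Continuous F.proj := continuous_quotient_mk'

/-- The dimension of the foliation: the maximal dimension of its leaves. -/
def dim : ℕ := ⨆ p : M, F.leafDim p

/-- A point lies on a regular leaf if its leaf has maximal dimension. -/
def IsRegular (p : M) : Prop := ∀ q : M, F.leafDim q ≤ F.leafDim p

/-- A set is saturated if it is a union of leaves. -/
def Saturated (U : Set M) : Prop := ∀ p ∈ U, F.leaf p ⊆ U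

/-- A point lies on a principal leaf if its leaf is regular and has trivial holonomy,
encoded here by the existence of a saturated open product (foliated) trivialization
around the leaf. -/
def IsPrincipal (p : M) : Prop :=
  F.IsRegular p ∧
    ∃ U : Set M, IsOpen U ∧ p ∈ U ∧ F.Saturated U ∧
      ∃ e : ↥U ≃ₜ ↥(F.leaf p) × ↥(F.proj '' U),
        ∀ x : U, ((e x).2 : F.LeafSpace) = F.proj (x : M)

/-- The principal stratum: the union of the principal leaves. -/
def Mprin : Set M := {p : M | F.IsPrincipal p}

/-- A continuous cross-section of the leaf projection. -/
def IsCrossSection (sec : C(F.LeafSpace, M)) : Prop := ∀ x : F.LeafSpace, F.proj (sec x) = x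

end SFoliation

/-- A topological space is aspherical if all its homotopy groups in degrees `≥ 2` vanish. -/
def Aspherical (X : Type*) [TopologicalSpace X] : Prop :=
  ∀ n : ℕ, 2 ≤ n → ∀ x : X, Subsingleton (HomotopyGroup (Fin n) X x)

/-- An A-foliation: a singular (Riemannian) foliation all of whose leaves are closed
and aspherical. -/
structure SFoliation.IsAFoliation {M : Type*} [TopologicalSpace M] (F : SFoliation M) : Prop where
  isClosed_leaf : ∀ p : M, IsClosed (F.leaf p)
  aspherical_leaf : ∀ p : M, Aspherical (F.leaf p)

/-- The standard `n`-torus `S¹ × ⋯ × S¹`. -/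
abbrev Torus (n : ℕ) : Type := Fin n → Circle

/-- A foliated homeomorphism: a homeomorphism sending leaves onto leaves. -/
structure FoliatedHomeo {M₁ M₂ : Type*} [TopologicalSpace M₁] [TopologicalSpace M₂]
    (F₁ : SFoliation M₁) (F₂ : SFoliation M₂) extends M₁ ≃ₜ M₂ where
  leaf_rel : ∀ p q : M₁, F₁.rel p q ↔ F₂.rel (toHomeomorph p) (toHomeomorph q)

section ExpData

variable {M : Type*} [TopologicalSpace M]

/-- Abstract normal exponential data along the leaf `L_p` of a singular foliation:
for each point `x` of the leaf, a map `exp x` from the normal space at `x`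
(identified with `ℝᵏ`) into `M`. -/
structure LeafExpData (F : SFoliation M) (p : M) (k : ℕ) where
  exp : F.leaf p → EuclideanSpace ℝ (Fin k) → M
  exp_zero : ∀ x : F.leaf p, exp x 0 = (x : M)
  continuous_exp : ∀ x : F.leaf p, Continuous (exp x)

/-- The leaf of the infinitesimal foliation `F^p` (at the point `x` of the leaf `L_p`)
through the normal vector `v`: the connected component containing `v` of the preimage,
under the normal exponential map, of the leaf of `F` through `exp x v`. -/
def LeafExpData.infLeaf {F : SFoliation M} {p : M} {k : ℕ} (E : LeafExpData F p k)
    (x : F.leaf p) (v : EuclideanSpace ℝ (Fin k)) : Set (EuclideanSpace ℝ (Fin k)) :=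
  connectedComponentIn ((E.exp x) ⁻¹' (F.leaf (E.exp x v))) v

/-- Sliding data along a curve `γ` in the leaf `L_p` (Mendes–Radeschi): a continuous
family of linear isometries of the normal spaces, starting at the identity, preserving
the infinitesimal foliations, and such that `exp_{γ t} (s • G t v)` stays in the leaf
of `exp_{γ 0} (s • v)`. -/
structure Sliding {F : SFoliation M} {p : M} {k : ℕ} (E : LeafExpData F p k)
    {x y : F.leaf p} (γ : Path x y) where
  G : unitInterval → (EuclideanSpace ℝ (Fin k) ≃ₗᵢ[ℝ] EuclideanSpace ℝ (Fin k))
  G_zero : G 0 = LinearIsometryEquiv.refl ℝ (EuclideanSpace ℝ (Fin k))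
  continuous_G : Continuous fun tv : unitInterval × EuclideanSpace ℝ (Fin k) => G tv.1 tv.2
  foliated : ∀ (t : unitInterval) (v : EuclideanSpace ℝ (Fin k)),
    (G t) '' (E.infLeaf x v) = E.infLeaf (γ t) (G t v)
  slides : ∀ (t : unitInterval) (s : ℝ) (v : EuclideanSpace ℝ (Fin k)),
    F.rel (E.exp (γ t) (s • (G t v))) (E.exp x (s • v))

end ExpData

/-- The continuous map `h` from the principal leaf `L₀` (through `p₀`) into `M` is
induced by horizontal lifts of the path `γ` in the principal part `M*_prin` of the leaf
space: for each `x ∈ L₀` there is a lift of `γ` starting at `x` and ending at `h x`,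
depending continuously on `x`. -/
def SFoliation.InducedByLift {M : Type*} [TopologicalSpace M] (F : SFoliation M) {p₀ : M}
    {a b : ↥(F.proj '' F.Mprin)} (γ : Path a b) (h : C(↥(F.leaf p₀), M)) : Prop :=
  ∃ δ : ↥(F.leaf p₀) → unitInterval → M,
    (Continuous fun xt : ↥(F.leaf p₀) × unitInterval => δ xt.1 xt.2) ∧
    (∀ x : ↥(F.leaf p₀), δ x 0 = (x : M)) ∧
    (∀ x : ↥(F.leaf p₀), δ x 1 = h x) ∧
    (∀ (x : ↥(F.leaf p₀)) (t : unitInterval), F.proj (δ x t) = (γ t : F.LeafSpace))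

/-- The inclusion of a leaf into the ambient space, as a continuous map. -/
def SFoliation.leafIncl {M : Type*} [TopologicalSpace M] (F : SFoliation M) (q : M) :
    C(↥(F.leaf q), M) :=
  ⟨Subtype.val, continuous_subtype_val⟩

section GeoHelpers

/-- Continuity on a union of two closed sets. -/
lemma continuousOn_union_of_isClosed {X Y : Type*} [TopologicalSpace X] [TopologicalSpace Y]
    {f : X → Y} {s t : Set X} (hs : IsClosed s) (ht : IsClosed t)
    (hfs : ContinuousOn f s) (hft : ContinuousOn f t) : ContinuousOn f (s ∪ t) := by
  intro x hx
  have h1 : ContinuousWithinAt f s x := by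
    rcases em (x ∈ s) with h | h
    · exact hfs x h
    · exact continuousWithinAt_of_notMem_closure (by rwa [hs.closure_eq])
  have h2 : ContinuousWithinAt f t x := by
    rcases em (x ∈ t) with h | h
    · exact hft x h
    · exact continuousWithinAt_of_notMem_closure (by rwa [ht.closure_eq])
  exact h1.union h2

/-- clamp to [0,1] -/
def c01 (x : ℝ) : ℝ := max 0 (min 1 x)

@[fun_prop]
lemma c01_continuous : Continuous c01 := by
  unfold c01; fun_prop

lemma c01_nonneg (x : ℝ) : 0 ≤ c01 x := le_max_left _ _

lemma c01_le_one (x : ℝ) : c01 x ≤ 1 := by simp [c01]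

lemma c01_of_mem {x : ℝ} (h0 : 0 ≤ x) (h1 : x ≤ 1) : c01 x = x := by
  simp [c01, min_eq_right h1, max_eq_right h0]

def clampI (x : ℝ) : I := Set.projIcc 0 1 zero_le_one x

lemma clampI_continuous : Continuous clampI := by
  unfold clampI; exact continuous_projIcc

lemma clampI_coe {x : ℝ} (h0 : 0 ≤ x) (h1 : x ≤ 1) : ((clampI x : I) : ℝ) = x := by
  simp [clampI, Set.projIcc_of_mem zero_le_one ⟨h0, h1⟩]

/-- closed rectangle in the unit square -/
def usq (a₁ b₁ a₂ b₂ : ℝ) : Set (I × I) :=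
  {z | a₁ ≤ (z.1 : ℝ) ∧ (z.1 : ℝ) ≤ b₁ ∧ a₂ ≤ (z.2 : ℝ) ∧ (z.2 : ℝ) ≤ b₂}

lemma cont_c1 : Continuous fun z : I × I => (z.1 : ℝ) :=
  continuous_subtype_val.comp continuous_fst

lemma cont_c2 : Continuous fun z : I × I => (z.2 : ℝ) :=
  continuous_subtype_val.comp continuous_snd

lemma isClosed_usq (a₁ b₁ a₂ b₂ : ℝ) : IsClosed (usq a₁ b₁ a₂ b₂) := by
  apply IsClosed.inter
  · exact isClosed_le continuous_const cont_c1
  apply IsClosed.inter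
  · exact isClosed_le cont_c1 continuous_const
  exact (isClosed_le continuous_const cont_c2).inter (isClosed_le cont_c2 continuous_const)

section retL

variable (a₁ b₁ a₂ b₂ : ℝ)

/-- retraction of the rectangle onto (left ∪ bottom). -/
def retL (z : I × I) : I × I :=
  (clampI (min b₁ (a₁ + max 0 (((z.1 : ℝ) - a₁) - ((z.2 : ℝ) - a₂)))),
   clampI (min b₂ (a₂ + max 0 (((z.2 : ℝ) - a₂) - ((z.1 : ℝ) - a₁)))))

lemma retL_continuous : Continuous (retL a₁ b₁ a₂ b₂) := by
  unfold retL
  exact ((clampI_continuous.comp (by fun_prop)).prodMk (clampI_continuous.comp (by fun_prop)))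

variable {a₁ b₁ a₂ b₂}

lemma retL_coe (h0₁ : 0 ≤ a₁) (h0₂ : 0 ≤ a₂) (hab₁ : a₁ ≤ b₁) (hab₂ : a₂ ≤ b₂)
    (hb₁ : b₁ ≤ 1) (hb₂ : b₂ ≤ 1) {z : I × I} (hz : z ∈ usq a₁ b₁ a₂ b₂) :
    ((retL a₁ b₁ a₂ b₂ z).1 : ℝ)
        = min b₁ (a₁ + max 0 (((z.1 : ℝ) - a₁) - ((z.2 : ℝ) - a₂))) ∧
      ((retL a₁ b₁ a₂ b₂ z).2 : ℝ)
        = min b₂ (a₂ + max 0 (((z.2 : ℝ) - a₂) - ((z.1 : ℝ) - a₁))) := by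
  constructor
  · exact clampI_coe (le_min (by linarith) (by positivity)) (min_le_of_left_le hb₁)
  · exact clampI_coe (le_min (by linarith) (by positivity)) (min_le_of_left_le hb₂)

lemma retL_spec (h0₁ : 0 ≤ a₁) (h0₂ : 0 ≤ a₂) (hab₁ : a₁ ≤ b₁) (hab₂ : a₂ ≤ b₂)
    (hb₁ : b₁ ≤ 1) (hb₂ : b₂ ≤ 1) {z : I × I} (hz : z ∈ usq a₁ b₁ a₂ b₂) :
    retL a₁ b₁ a₂ b₂ z ∈ usq a₁ b₁ a₂ b₂ ∧
      (((retL a₁ b₁ a₂ b₂ z).1 : ℝ) = a₁ ∨ ((retL a₁ b₁ a₂ b₂ z).2 : ℝ) = a₂) := by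
  obtain ⟨e1, e2⟩ := retL_coe h0₁ h0₂ hab₁ hab₂ hb₁ hb₂ hz
  obtain ⟨hz1, hz2, hz3, hz4⟩ := hz
  rcases le_total ((z.1 : ℝ) - a₁) ((z.2 : ℝ) - a₂) with h | h
  · have m1 : max 0 (((z.1:ℝ) - a₁) - ((z.2:ℝ) - a₂)) = 0 := max_eq_left (by linarith)
    have m2 : max 0 (((z.2:ℝ) - a₂) - ((z.1:ℝ) - a₁)) = ((z.2:ℝ) - a₂) - ((z.1:ℝ) - a₁) :=
      max_eq_right (by linarith)
    have r1 : ((retL a₁ b₁ a₂ b₂ z).1 : ℝ) = a₁ := by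
      rw [e1, m1, add_zero, min_eq_right hab₁]
    have r2 : ((retL a₁ b₁ a₂ b₂ z).2 : ℝ)
        = min b₂ (a₂ + (((z.2:ℝ) - a₂) - ((z.1:ℝ) - a₁))) := by rw [e2, m2]
    refine ⟨⟨?_, ?_, ?_, ?_⟩, Or.inl r1⟩
    · rw [r1]
    · rw [r1]; exact hab₁
    · rw [r2]; exact le_min (by linarith) (by linarith)
    · rw [r2]; exact min_le_left _ _
  · have m1 : max 0 (((z.1:ℝ) - a₁) - ((z.2:ℝ) - a₂)) = ((z.1:ℝ) - a₁) - ((z.2:ℝ) - a₂) :=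
      max_eq_right (by linarith)
    have m2 : max 0 (((z.2:ℝ) - a₂) - ((z.1:ℝ) - a₁)) = 0 := max_eq_left (by linarith)
    have r2 : ((retL a₁ b₁ a₂ b₂ z).2 : ℝ) = a₂ := by
      rw [e2, m2, add_zero, min_eq_right hab₂]
    have r1 : ((retL a₁ b₁ a₂ b₂ z).1 : ℝ)
        = min b₁ (a₁ + (((z.1:ℝ) - a₁) - ((z.2:ℝ) - a₂))) := by rw [e1, m1]
    refine ⟨⟨?_, ?_, ?_, ?_⟩, Or.inr r2⟩
    · rw [r1]; exact le_min (by linarith) (by linarith)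
    · rw [r1]; exact min_le_left _ _
    · rw [r2]
    · rw [r2]; exact hab₂

lemma retL_fix (h0₁ : 0 ≤ a₁) (h0₂ : 0 ≤ a₂) (hab₁ : a₁ ≤ b₁) (hab₂ : a₂ ≤ b₂)
    (hb₁ : b₁ ≤ 1) (hb₂ : b₂ ≤ 1) {z : I × I} (hz : z ∈ usq a₁ b₁ a₂ b₂)
    (hA : (z.1 : ℝ) = a₁ ∨ (z.2 : ℝ) = a₂) : retL a₁ b₁ a₂ b₂ z = z := by
  obtain ⟨e1, e2⟩ := retL_coe h0₁ h0₂ hab₁ hab₂ hb₁ hb₂ hz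
  obtain ⟨hz1, hz2, hz3, hz4⟩ := hz
  rcases hA with h | h
  · have m1 : max 0 (((z.1:ℝ) - a₁) - ((z.2:ℝ) - a₂)) = 0 := max_eq_left (by rw [h]; linarith)
    have m2 : max 0 (((z.2:ℝ) - a₂) - ((z.1:ℝ) - a₁)) = ((z.2:ℝ) - a₂) - ((z.1:ℝ) - a₁) :=
      max_eq_right (by rw [h]; linarith)
    apply Prod.ext <;> apply Subtype.ext
    · rw [e1, m1, add_zero, min_eq_right hab₁, h]
    · rw [e2, m2, h]
      have : a₂ + ((z.2:ℝ) - a₂ - (a₁ - a₁)) = (z.2:ℝ) := by ring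
      rw [this, min_eq_right hz4]
  · have m1 : max 0 (((z.1:ℝ) - a₁) - ((z.2:ℝ) - a₂)) = ((z.1:ℝ) - a₁) - ((z.2:ℝ) - a₂) :=
      max_eq_right (by rw [h]; linarith)
    have m2 : max 0 (((z.2:ℝ) - a₂) - ((z.1:ℝ) - a₁)) = 0 := max_eq_left (by rw [h]; linarith)
    apply Prod.ext <;> apply Subtype.ext
    · rw [e1, m1, h]
      have : a₁ + ((z.1:ℝ) - a₁ - (a₂ - a₂)) = (z.1:ℝ) := by ring
      rw [this, min_eq_right hz2]
    · rw [e2, m2, add_zero, min_eq_right hab₂, h]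

end retL

section retU

/-- horizontal coordinate of the unit-square retraction onto bottom∪left∪right -/
def xstar (u v : ℝ) : ℝ := min 1 (max 0 (1/2 + 2*(u - 1/2)/(2 - v)))

/-- vertical coordinate -/
def ystar (u v : ℝ) : ℝ := (max 0 (2*|1 - 2*u| - (2 - v))) / |1 - 2*u|

lemma xstar_cont : Continuous fun p : ℝ × ℝ => xstar (c01 p.1) (c01 p.2) := by
  unfold xstar
  apply Continuous.min continuous_const
  apply Continuous.max continuous_const
  apply Continuous.add continuous_const
  apply Continuous.div (by fun_prop) (by fun_prop)
  intro p hc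
  have := c01_le_one p.2
  linarith

lemma ystar_cont : Continuous fun p : ℝ × ℝ => ystar (c01 p.1) (c01 p.2) := by
  have cnum : Continuous fun q : ℝ × ℝ => max 0 (2*|1 - 2*c01 q.1| - (2 - c01 q.2)) := by
    apply Continuous.max continuous_const
    apply Continuous.sub
    · exact continuous_const.mul
        (continuous_const.sub (continuous_const.mul (c01_continuous.comp continuous_fst))).abs
    · exact continuous_const.sub (c01_continuous.comp continuous_snd)
  have cden : Continuous fun q : ℝ × ℝ => |1 - 2*c01 q.1| :=
    (continuous_const.sub (continuous_const.mul (c01_continuous.comp continuous_fst))).abs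
  rw [continuous_iff_continuousAt]
  intro p
  rcases eq_or_ne |1 - 2 * c01 p.1| 0 with h | h
  · have hopen : IsOpen {q : ℝ × ℝ | |c01 q.1 - 1/2| < 1/4} :=
      isOpen_lt (((c01_continuous.comp continuous_fst).sub continuous_const).abs)
        continuous_const
    have hc : c01 p.1 = 1/2 := by
      have := abs_eq_zero.1 h; linarith
    have hmem : p ∈ {q : ℝ × ℝ | |c01 q.1 - 1/2| < 1/4} := by
      simp [Set.mem_setOf_eq, hc]
    have hzero : ∀ q ∈ {q : ℝ × ℝ | |c01 q.1 - 1/2| < 1/4},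
        ystar (c01 q.1) (c01 q.2) = 0 := by
      intro q hq
      have habs : |1 - 2*c01 q.1| = 2 * |c01 q.1 - 1/2| := by
        rw [show (1 : ℝ) - 2*c01 q.1 = -(2 * (c01 q.1 - 1/2)) by ring, abs_neg, abs_mul]
        simp [abs_of_nonneg]
      have h1 : 2*|1 - 2*c01 q.1| - (2 - c01 q.2) ≤ 0 := by
        have h2 := c01_le_one q.2
        have h3 : |c01 q.1 - 1/2| < 1/4 := hq
        rw [habs]; linarith
      unfold ystar
      rw [max_eq_left h1, zero_div]
    have hev : (fun q : ℝ × ℝ => ystar (c01 q.1) (c01 q.2)) =ᶠ[𝓝 p] fun _ => 0 :=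
      Filter.eventually_of_mem (hopen.mem_nhds hmem) hzero
    exact continuousAt_const.congr hev.symm
  · exact (cnum.continuousAt.div cden.continuousAt h)

variable {u v : ℝ}

lemma xstar_mem (h0u : 0 ≤ u) (h1u : u ≤ 1) (h0v : 0 ≤ v) (h1v : v ≤ 1) :
    0 ≤ xstar u v ∧ xstar u v ≤ 1 :=
  ⟨le_min zero_le_one (le_max_left _ _), min_le_left _ _⟩

lemma ystar_nonneg : 0 ≤ ystar u v := div_nonneg (le_max_left _ _) (abs_nonneg _)

lemma abs_le_one' (h0u : 0 ≤ u) (h1u : u ≤ 1) : |1 - 2*u| ≤ 1 :=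
  abs_le.2 ⟨by linarith, by linarith⟩

lemma ystar_le_one (h0u : 0 ≤ u) (h1u : u ≤ 1) (h0v : 0 ≤ v) (h1v : v ≤ 1) :
    ystar u v ≤ 1 := by
  rcases eq_or_ne |1 - 2*u| 0 with h | h
  · unfold ystar; rw [h, div_zero]; exact zero_le_one
  · have hpos : 0 < |1 - 2*u| := lt_of_le_of_ne (abs_nonneg _) (Ne.symm h)
    rw [ystar, div_le_one hpos]
    apply max_le (abs_nonneg _)
    have := abs_le_one' h0u h1u
    linarith

lemma ystar_pos_xstar (h0u : 0 ≤ u) (h1u : u ≤ 1) (h0v : 0 ≤ v) (h1v : v ≤ 1)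
    (h : 0 < ystar u v) : xstar u v = 0 ∨ xstar u v = 1 := by
  have h2v : (0:ℝ) < 2 - v := by linarith
  have hnum : 0 < 2*|1 - 2*u| - (2 - v) := by
    by_contra hc
    push_neg at hc
    rw [ystar, max_eq_left hc, zero_div] at h
    exact lt_irrefl _ h
  rcases le_total u (1/2) with hu | hu
  · left
    have habs : |1 - 2*u| = 1 - 2*u := abs_of_nonneg (by linarith)
    rw [habs] at hnum
    have hw : 1/2 + 2*(u - 1/2)/(2 - v) ≤ 0 := by
      have : 2*(u - 1/2)/(2-v) ≤ -(1/2) := by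
        rw [div_le_iff₀ h2v]; nlinarith
      linarith
    rw [xstar, max_eq_left hw]
    exact min_eq_right zero_le_one
  · right
    have habs : |1 - 2*u| = -(1 - 2*u) := abs_of_nonpos (by linarith)
    rw [habs] at hnum
    have hw : 1 ≤ 1/2 + 2*(u - 1/2)/(2 - v) := by
      have : (1:ℝ)/2 ≤ 2*(u - 1/2)/(2-v) := by
        rw [le_div_iff₀ h2v]; nlinarith
      linarith
    rw [xstar]
    exact min_eq_left (le_max_of_le_right hw)

lemma xstar_bottom (h0u : 0 ≤ u) (h1u : u ≤ 1) : xstar u 0 = u := by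
  rw [xstar]
  have : 1/2 + 2*(u - 1/2)/(2 - 0) = u := by ring
  rw [this, max_eq_right h0u, min_eq_right h1u]

lemma ystar_bottom (h0u : 0 ≤ u) (h1u : u ≤ 1) : ystar u 0 = 0 := by
  rw [ystar]
  have h1 : 2*|1 - 2*u| - (2 - 0) ≤ 0 := by
    have := abs_le_one' h0u h1u; linarith
  rw [max_eq_left h1, zero_div]

lemma xstar_left (h0v : 0 ≤ v) (h1v : v ≤ 1) : xstar 0 v = 0 := by
  have h2v : (0:ℝ) < 2 - v := by linarith
  rw [xstar]
  have hw : 1/2 + 2*((0:ℝ) - 1/2)/(2 - v) ≤ 0 := by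
    have : (1:ℝ)/2 ≤ 1/(2-v) := by
      rw [le_div_iff₀ h2v]; linarith
    have h2 : 2*((0:ℝ) - 1/2)/(2 - v) = -(1/(2-v)) := by ring
    rw [h2]; linarith
  rw [max_eq_left hw]
  exact min_eq_right zero_le_one

lemma ystar_left (h0v : 0 ≤ v) (h1v : v ≤ 1) : ystar 0 v = v := by
  rw [ystar]
  norm_num
  exact h0v

lemma xstar_right (h0v : 0 ≤ v) (h1v : v ≤ 1) : xstar 1 v = 1 := by
  have h2v : (0:ℝ) < 2 - v := by linarith
  rw [xstar]
  have hw : 1 ≤ 1/2 + 2*((1:ℝ) - 1/2)/(2 - v) := by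
    have : (1:ℝ)/2 ≤ 1/(2-v) := by
      rw [le_div_iff₀ h2v]; linarith
    have h2 : 2*((1:ℝ) - 1/2)/(2 - v) = 1/(2-v) := by ring
    rw [h2]; linarith
  exact min_eq_left (le_max_of_le_right hw)

lemma ystar_right (h0v : 0 ≤ v) (h1v : v ≤ 1) : ystar 1 v = v := by
  rw [ystar]
  norm_num
  exact h0v

variable (a₁ b₁ a₂ b₂ : ℝ)

/-- retraction of the rectangle onto (left ∪ bottom ∪ right). -/
def retU (z : I × I) : I × I :=
  (clampI (a₁ + (b₁ - a₁) *
      xstar (c01 (((z.1 : ℝ) - a₁)/(b₁ - a₁))) (c01 (((z.2 : ℝ) - a₂)/(b₂ - a₂)))),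
   clampI (a₂ + (b₂ - a₂) *
      ystar (c01 (((z.1 : ℝ) - a₁)/(b₁ - a₁))) (c01 (((z.2 : ℝ) - a₂)/(b₂ - a₂)))))

set_option maxHeartbeats 1000000 in
lemma retU_continuous : Continuous (retU a₁ b₁ a₂ b₂) := by
  have hc : Continuous fun z : I × I =>
      ((((z.1 : ℝ) - a₁)/(b₁ - a₁)), (((z.2 : ℝ) - a₂)/(b₂ - a₂))) := by fun_prop
  unfold retU
  apply Continuous.prodMk
  · exact clampI_continuous.comp
      (continuous_const.add (continuous_const.mul (xstar_cont.comp hc)))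
  · exact clampI_continuous.comp
      (continuous_const.add (continuous_const.mul (ystar_cont.comp hc)))

variable {a₁ b₁ a₂ b₂}

lemma retU_spec (h0₁ : 0 ≤ a₁) (h0₂ : 0 ≤ a₂) (hab₁ : a₁ < b₁) (hab₂ : a₂ < b₂)
    (hb₁ : b₁ ≤ 1) (hb₂ : b₂ ≤ 1) {z : I × I} (hz : z ∈ usq a₁ b₁ a₂ b₂) :
    retU a₁ b₁ a₂ b₂ z ∈ usq a₁ b₁ a₂ b₂ ∧
      (((retU a₁ b₁ a₂ b₂ z).1 : ℝ) = a₁ ∨ ((retU a₁ b₁ a₂ b₂ z).1 : ℝ) = b₁ ∨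
        ((retU a₁ b₁ a₂ b₂ z).2 : ℝ) = a₂) := by
  obtain ⟨hz1, hz2, hz3, hz4⟩ := hz
  have hd₁ : (0:ℝ) < b₁ - a₁ := by linarith
  have hd₂ : (0:ℝ) < b₂ - a₂ := by linarith
  set u := c01 (((z.1 : ℝ) - a₁)/(b₁ - a₁)) with hu
  set v := c01 (((z.2 : ℝ) - a₂)/(b₂ - a₂)) with hv
  have h0u : 0 ≤ u := c01_nonneg _
  have h1u : u ≤ 1 := c01_le_one _
  have h0v : 0 ≤ v := c01_nonneg _
  have h1v : v ≤ 1 := c01_le_one _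
  obtain ⟨hx0, hx1⟩ := xstar_mem h0u h1u h0v h1v
  have hy0 : 0 ≤ ystar u v := ystar_nonneg
  have hy1 : ystar u v ≤ 1 := ystar_le_one h0u h1u h0v h1v
  have m0 : 0 ≤ (b₁ - a₁) * xstar u v := mul_nonneg hd₁.le hx0
  have m1 : (b₁ - a₁) * xstar u v ≤ b₁ - a₁ := mul_le_of_le_one_right hd₁.le hx1
  have n0 : 0 ≤ (b₂ - a₂) * ystar u v := mul_nonneg hd₂.le hy0
  have n1 : (b₂ - a₂) * ystar u v ≤ b₂ - a₂ := mul_le_of_le_one_right hd₂.le hy1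
  have e1 : ((retU a₁ b₁ a₂ b₂ z).1 : ℝ) = a₁ + (b₁ - a₁) * xstar u v :=
    clampI_coe (by linarith) (by linarith)
  have e2 : ((retU a₁ b₁ a₂ b₂ z).2 : ℝ) = a₂ + (b₂ - a₂) * ystar u v :=
    clampI_coe (by linarith) (by linarith)
  refine ⟨⟨by rw [e1]; linarith, by rw [e1]; linarith,
    by rw [e2]; linarith, by rw [e2]; linarith⟩, ?_⟩
  rcases eq_or_lt_of_le hy0 with h | h
  · right; right; rw [e2, ← h]; ring
  · rcases ystar_pos_xstar h0u h1u h0v h1v h with h' | h'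
    · left; rw [e1, h']; ring
    · right; left; rw [e1, h']; ring

lemma retU_fix (h0₁ : 0 ≤ a₁) (h0₂ : 0 ≤ a₂) (hab₁ : a₁ < b₁) (hab₂ : a₂ < b₂)
    (hb₁ : b₁ ≤ 1) (hb₂ : b₂ ≤ 1) {z : I × I} (hz : z ∈ usq a₁ b₁ a₂ b₂)
    (hA : (z.1 : ℝ) = a₁ ∨ (z.1 : ℝ) = b₁ ∨ (z.2 : ℝ) = a₂) : retU a₁ b₁ a₂ b₂ z = z := by
  obtain ⟨hz1, hz2, hz3, hz4⟩ := hz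
  have hd₁ : (0:ℝ) < b₁ - a₁ := by linarith
  have hd₂ : (0:ℝ) < b₂ - a₂ := by linarith
  set u := c01 (((z.1 : ℝ) - a₁)/(b₁ - a₁)) with hu
  set v := c01 (((z.2 : ℝ) - a₂)/(b₂ - a₂)) with hv
  have hraw_u : ((z.1 : ℝ) - a₁)/(b₁ - a₁) ∈ Set.Icc (0:ℝ) 1 :=
    ⟨div_nonneg (by linarith) hd₁.le, (div_le_one hd₁).2 (by linarith)⟩
  have hraw_v : ((z.2 : ℝ) - a₂)/(b₂ - a₂) ∈ Set.Icc (0:ℝ) 1 :=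
    ⟨div_nonneg (by linarith) hd₂.le, (div_le_one hd₂).2 (by linarith)⟩
  have hu' : u = ((z.1 : ℝ) - a₁)/(b₁ - a₁) := c01_of_mem hraw_u.1 hraw_u.2
  have hv' : v = ((z.2 : ℝ) - a₂)/(b₂ - a₂) := c01_of_mem hraw_v.1 hraw_v.2
  have h0v : 0 ≤ v := c01_nonneg _
  have h1v : v ≤ 1 := c01_le_one _
  have h0u : 0 ≤ u := c01_nonneg _
  have h1u : u ≤ 1 := c01_le_one _
  rcases hA with h | h | h
  · -- left edge
    have hu0 : u = 0 := by rw [hu', h]; simp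
    have ex : xstar u v = 0 := by rw [hu0]; exact xstar_left h0v h1v
    have ey : ystar u v = v := by rw [hu0]; exact ystar_left h0v h1v
    apply Prod.ext <;> apply Subtype.ext
    · show ((clampI _ : I) : ℝ) = _
      rw [show a₁ + (b₁ - a₁) * xstar u v = (z.1:ℝ) by rw [ex, h]; ring]
      exact clampI_coe z.1.2.1 z.1.2.2
    · show ((clampI _ : I) : ℝ) = _
      rw [show a₂ + (b₂ - a₂) * ystar u v = (z.2:ℝ) by rw [ey, hv']; field_simp; ring]
      exact clampI_coe z.2.2.1 z.2.2.2
  · -- right edge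
    have hu0 : u = 1 := by rw [hu', h]; field_simp
    have ex : xstar u v = 1 := by rw [hu0]; exact xstar_right h0v h1v
    have ey : ystar u v = v := by rw [hu0]; exact ystar_right h0v h1v
    apply Prod.ext <;> apply Subtype.ext
    · show ((clampI _ : I) : ℝ) = _
      rw [show a₁ + (b₁ - a₁) * xstar u v = (z.1:ℝ) by rw [ex, h]; ring]
      exact clampI_coe z.1.2.1 z.1.2.2
    · show ((clampI _ : I) : ℝ) = _
      rw [show a₂ + (b₂ - a₂) * ystar u v = (z.2:ℝ) by rw [ey, hv']; field_simp; ring]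
      exact clampI_coe z.2.2.1 z.2.2.2
  · -- bottom edge
    have hv0 : v = 0 := by rw [hv', h]; simp
    have ex : xstar u v = u := by rw [hv0]; exact xstar_bottom h0u h1u
    have ey : ystar u v = 0 := by rw [hv0]; exact ystar_bottom h0u h1u
    apply Prod.ext <;> apply Subtype.ext
    · show ((clampI _ : I) : ℝ) = _
      rw [show a₁ + (b₁ - a₁) * xstar u v = (z.1:ℝ) by rw [ex, hu']; field_simp; ring]
      exact clampI_coe z.1.2.1 z.1.2.2
    · show ((clampI _ : I) : ℝ) = _
      rw [show a₂ + (b₂ - a₂) * ystar u v = (z.2:ℝ) by rw [ey, h]; ring]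
      exact clampI_coe z.2.2.1 z.2.2.2

end retU

end GeoHelpers

section FolHelpers

open Set Filter Topology

variable {M : Type*} [TopologicalSpace M] (F : SFoliation M)

lemma SFoliation.rel_of_proj_eq {p q : M} (h : F.proj p = F.proj q) : F.rel p q :=
  Quotient.exact h

lemma SFoliation.proj_eq_of_rel {p q : M} (h : F.rel p q) : F.proj p = F.proj q :=
  Quotient.sound h

lemma SFoliation.isQuotientMap_proj : IsQuotientMap F.proj := isQuotientMap_quot_mk

/-- A trivializing chart of the leaf projection over an open set `V` of the leaf space. -/
def SFoliation.ChartAt (V : Set F.LeafSpace) : Prop :=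
  IsOpen V ∧ ∃ (q : M) (e : ↥(F.proj ⁻¹' V) ≃ₜ ↥(F.leaf q) × ↥V),
    ∀ u : ↥(F.proj ⁻¹' V), ((e u).2 : F.LeafSpace) = F.proj (u : M)

lemma SFoliation.exists_chart {b : F.LeafSpace} (hb : b ∈ F.proj '' F.Mprin) :
    ∃ V, F.ChartAt V ∧ b ∈ V := by
  obtain ⟨p, hp, rfl⟩ := hb
  obtain ⟨-, U, hUo, hpU, hsat, e, he⟩ := hp
  have hpre : F.proj ⁻¹' (F.proj '' U) = U := by
    apply Set.Subset.antisymm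
    · intro m hm
      obtain ⟨u, hu, hum⟩ := hm
      exact hsat u hu (F.rel_of_proj_eq hum)
    · exact Set.subset_preimage_image _ _
  have hVo : IsOpen (F.proj '' U) := by
    rw [← F.isQuotientMap_proj.isOpen_preimage, hpre]; exact hUo
  refine ⟨F.proj '' U, ⟨hVo, p, (Homeomorph.setCongr hpre).trans e, ?_⟩, ⟨p, hpU, rfl⟩⟩
  intro u
  exact he ((Homeomorph.setCongr hpre) u)

/-- Extending a partial lift over one more chart-sized closed square. -/
lemma SFoliation.step_lift {X : Type*} [TopologicalSpace X]
    {g : I × I → F.LeafSpace} (hgc : Continuous g)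
    {V : Set F.LeafSpace} {q : M}
    (e : ↥(F.proj ⁻¹' V) ≃ₜ ↥(F.leaf q) × ↥V)
    (he : ∀ u : ↥(F.proj ⁻¹' V), ((e u).2 : F.LeafSpace) = F.proj (u : M))
    {S D : Set (I × I)} (hS : IsClosed S) (hD : IsClosed D)
    {ρ : I × I → I × I} (hρc : Continuous ρ)
    (hρD : ∀ z ∈ D, ρ z ∈ D ∩ S) (hρA : ∀ z ∈ D ∩ S, ρ z = z)
    (hgD : ∀ z ∈ D, g z ∈ V)
    {f : (I × I) × X → M}
    (hfc : ContinuousOn f (S ×ˢ (Set.univ : Set X)))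
    (hfp : ∀ z ∈ S, ∀ x, F.proj (f (z, x)) = g z) :
    ∃ f' : (I × I) × X → M,
      ContinuousOn f' ((S ∪ D) ×ˢ (Set.univ : Set X)) ∧
      (∀ z ∈ S ∪ D, ∀ x, F.proj (f' (z, x)) = g z) ∧
      (∀ p ∈ S ×ˢ (Set.univ : Set X), f' p = f p) := by
  classical
  have hmemU : ∀ (z : I × I), z ∈ D → ∀ x : X, f (ρ z, x) ∈ F.proj ⁻¹' V := by
    intro z hz x
    have h1 := hρD z hz
    simp only [Set.mem_preimage]
    rw [hfp _ h1.2]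
    exact hgD _ h1.1
  set φ : ↥(D ×ˢ (Set.univ : Set X)) → M := fun p =>
    ((e.symm ((e ⟨f (ρ p.1.1, p.1.2), hmemU _ p.2.1 _⟩).1, ⟨g p.1.1, hgD _ p.2.1⟩)) : M)
    with hφ
  have hc0 : Continuous fun p : ↥(D ×ˢ (Set.univ : Set X)) => f (ρ p.1.1, p.1.2) := by
    have hmaps : ∀ p : ↥(D ×ˢ (Set.univ : Set X)),
        ((ρ p.1.1, p.1.2) : (I × I) × X) ∈ S ×ˢ (Set.univ : Set X) :=
      fun p => ⟨(hρD _ p.2.1).2, trivial⟩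
    exact hfc.comp_continuous
      (((hρc.comp (continuous_fst.comp continuous_subtype_val)).prodMk
        (continuous_snd.comp continuous_subtype_val))) hmaps
  have hcφ : Continuous φ := by
    apply continuous_subtype_val.comp
    apply e.symm.continuous.comp
    apply Continuous.prodMk
    · exact continuous_fst.comp (e.continuous.comp (hc0.subtype_mk fun p => hmemU _ p.2.1 _))
    · apply Continuous.subtype_mk
      exact hgc.comp continuous_subtype_val.fst
  set f' : (I × I) × X → M := fun p =>
    if h : p.1 ∈ D then φ ⟨p, ⟨h, trivial⟩⟩ else f p with hf'
  have hE1 : ∀ (p : (I × I) × X) (h : p.1 ∈ D), p.1 ∈ S → φ ⟨p, ⟨h, trivial⟩⟩ = f p := by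
    intro p h h2
    have hfix : ρ p.1 = p.1 := hρA _ ⟨h, h2⟩
    show ((e.symm ((e ⟨f (ρ p.1, p.2), hmemU _ h _⟩).1, ⟨g p.1, hgD _ h⟩)) : M) = f p
    have h2' : (e ⟨f (ρ p.1, p.2), hmemU _ h _⟩).2 = ⟨g p.1, hgD _ h⟩ := by
      apply Subtype.ext
      rw [he ⟨f (ρ p.1, p.2), hmemU _ h _⟩]
      show F.proj (f (ρ p.1, p.2)) = g p.1
      rw [hfix]
      exact hfp _ h2 _
    rw [← h2', Prod.mk.eta, e.symm_apply_apply]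
    show f (ρ p.1, p.2) = f p
    rw [hfix]
  have hE2 : ∀ p ∈ S ×ˢ (Set.univ : Set X), f' p = f p := by
    intro p hp
    rw [hf']
    by_cases h : p.1 ∈ D
    · simp only [dif_pos h]
      exact hE1 p h hp.1
    · simp only [dif_neg h]
  refine ⟨f', ?_, ?_, hE2⟩
  · rw [Set.union_prod]
    apply continuousOn_union_of_isClosed (hS.prod isClosed_univ) (hD.prod isClosed_univ)
    · exact ContinuousOn.congr hfc hE2
    · rw [continuousOn_iff_continuous_restrict]
      apply hcφ.congr
      intro p
      show φ p = f' ↑p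
      rw [hf']
      try simp only [dif_pos p.2.1]
      try (congr 1; exact Subtype.ext rfl)
  · intro z hz x
    by_cases h : z ∈ D
    · have : f' (z, x) = φ ⟨(z, x), ⟨h, trivial⟩⟩ := by rw [hf']; simp only [dif_pos h]
      rw [this, hφ]
      have h3 := he (e.symm ((e ⟨f (ρ z, x), hmemU _ h _⟩).1, ⟨g z, hgD _ h⟩))
      rw [e.apply_symm_apply] at h3
      exact h3.symm
    · have hzS : z ∈ S := hz.resolve_right h
      have : f' (z, x) = f (z, x) := hE2 (z, x) ⟨hzS, trivial⟩
      rw [this]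
      exact hfp _ hzS _
end FolHelpers



section GridLemmas

open Set Filter Topology

/-- bottom edge ∪ left edge ∪ right edge of the unit square -/
def shapeU : Set (I × I) :=
  {z : I × I | (z.2 : ℝ) = 0} ∪ ({z : I × I | (z.1 : ℝ) = 0} ∪ {z : I × I | (z.1 : ℝ) = 1})

lemma isClosed_shapeU : IsClosed shapeU :=
  (isClosed_eq cont_c2 continuous_const).union
    ((isClosed_eq cont_c1 continuous_const).union (isClosed_eq cont_c1 continuous_const))

/-- bottom part of the square: the shape ∪ everything below height c -/
def botT (c : ℝ) : Set (I × I) := shapeU ∪ {z : I × I | (z.2 : ℝ) ≤ c}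

lemma isClosed_botT (c : ℝ) : IsClosed (botT c) :=
  isClosed_shapeU.union (isClosed_le cont_c2 continuous_const)

variable {M : Type*} [TopologicalSpace M]

/-- A partial lift of `g` on the region `S`, extending the initial data `lam` on `shapeU`. -/
def SFoliation.GoodLift {X : Type*} [TopologicalSpace X] (F : SFoliation M)
    (g : I × I → F.LeafSpace) (lam f : (I × I) × X → M) (S : Set (I × I)) : Prop :=
  ContinuousOn f (S ×ˢ (Set.univ : Set X)) ∧
    (∀ z ∈ S, ∀ x, F.proj (f (z, x)) = g z) ∧
    (∀ z ∈ shapeU, ∀ x, f (z, x) = lam (z, x))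

lemma SFoliation.GoodLift.congr_set {X : Type*} [TopologicalSpace X] {F : SFoliation M}
    {g : I × I → F.LeafSpace} {lam f : (I × I) × X → M} {S S' : Set (I × I)}
    (h : F.GoodLift g lam f S) (hS : S = S') : F.GoodLift g lam f S' := hS ▸ h

/-- extend a good partial lift over one grid square -/
lemma SFoliation.grid_step {X : Type*} [TopologicalSpace X] (F : SFoliation M)
    {g : I × I → F.LeafSpace} (hgc : Continuous g) {lam : (I × I) × X → M}
    {i j n : ℕ} (hi : i < n) (hj : j < n)
    {V : Set F.LeafSpace} (hV : F.ChartAt V)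
    (hgV : ∀ z ∈ usq ((i:ℝ)/n) (((i:ℝ)+1)/n) ((j:ℝ)/n) (((j:ℝ)+1)/n), g z ∈ V)
    {f : (I × I) × X → M}
    (hf : F.GoodLift g lam f
      (botT ((j:ℝ)/n) ∪ usq 0 ((i:ℝ)/n) ((j:ℝ)/n) (((j:ℝ)+1)/n))) :
    ∃ f', F.GoodLift g lam f'
      (botT ((j:ℝ)/n) ∪ usq 0 (((i:ℝ)+1)/n) ((j:ℝ)/n) (((j:ℝ)+1)/n)) := by
  obtain ⟨hVo, q, e, he⟩ := hV
  obtain ⟨hfc, hfp, hflam⟩ := hf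
  have hn0 : 0 < n := Nat.lt_of_le_of_lt (Nat.zero_le i) hi
  have hnpos : (0:ℝ) < n := by exact_mod_cast hn0
  set a₁ : ℝ := (i:ℝ)/n with ha₁
  set b₁ : ℝ := ((i:ℝ)+1)/n with hb₁
  set a₂ : ℝ := (j:ℝ)/n with ha₂
  set b₂ : ℝ := ((j:ℝ)+1)/n with hb₂
  have h0a₁ : 0 ≤ a₁ := by positivity
  have h0a₂ : 0 ≤ a₂ := by positivity
  have hlt₁ : a₁ < b₁ := by
    rw [ha₁, hb₁, div_lt_div_iff_of_pos_right hnpos]; linarith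
  have hlt₂ : a₂ < b₂ := by
    rw [ha₂, hb₂, div_lt_div_iff_of_pos_right hnpos]; linarith
  have hb₁1 : b₁ ≤ 1 := by
    rw [hb₁, div_le_one hnpos]
    have : ((i+1 : ℕ) : ℝ) ≤ (n : ℝ) := by exact_mod_cast hi
    push_cast at this; linarith
  have hb₂1 : b₂ ≤ 1 := by
    rw [hb₂, div_le_one hnpos]
    have : ((j+1 : ℕ) : ℝ) ≤ (n : ℝ) := by exact_mod_cast hj
    push_cast at this; linarith
  set S : Set (I × I) := botT a₂ ∪ usq 0 a₁ a₂ b₂ with hSdef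
  set D : Set (I × I) := usq a₁ b₁ a₂ b₂ with hDdef
  have hS : IsClosed S := (isClosed_botT a₂).union (isClosed_usq 0 a₁ a₂ b₂)
  have hD : IsClosed D := isClosed_usq a₁ b₁ a₂ b₂
  have hshS : shapeU ⊆ S := fun z hz => Or.inl (Or.inl hz)
  have hsub1 : ∀ z ∈ D, ((z.1:ℝ) = a₁ ∨ (z.2:ℝ) = a₂ ∨ (z.1:ℝ) = 1) → z ∈ S := by
    rintro z ⟨hz1, hz2, hz3, hz4⟩ (h | h | h)
    · exact Or.inr ⟨z.1.2.1, le_of_eq h, hz3, hz4⟩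
    · exact Or.inl (Or.inr (le_of_eq h))
    · exact Or.inl (Or.inl (Or.inr (Or.inr h)))
  have hsub2 : ∀ z ∈ D ∩ S, ((z.1:ℝ) = a₁ ∨ (z.2:ℝ) = a₂ ∨ (z.1:ℝ) = 1) := by
    rintro z ⟨⟨hz1, hz2, hz3, hz4⟩, hzS⟩
    rcases hzS with (hsh | hle) | hsq0
    · rcases hsh with h | (h | h)
      · right; left
        have h' : (z.2 : ℝ) = 0 := h
        linarith
      · left
        have h' : (z.1 : ℝ) = 0 := h
        linarith
      · right; right; exact h
    · right; left
      exact le_antisymm hle hz3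
    · left
      exact le_antisymm hsq0.2.1 hz1
  have hregion : S ∪ D = botT a₂ ∪ usq 0 b₁ a₂ b₂ := by
    ext z
    constructor
    · rintro ((h | ⟨h1, h2, h3, h4⟩) | ⟨h1, h2, h3, h4⟩)
      · exact Or.inl h
      · exact Or.inr ⟨h1, by linarith, h3, h4⟩
      · exact Or.inr ⟨z.1.2.1, h2, h3, h4⟩
    · rintro (h | ⟨h1, h2, h3, h4⟩)
      · exact Or.inl (Or.inl h)
      · rcases le_total ((z.1:ℝ)) a₁ with h' | h'
        · exact Or.inl (Or.inr ⟨h1, h', h3, h4⟩)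
        · exact Or.inr ⟨h', h2, h3, h4⟩
  rcases Nat.lt_or_ge (i+1) n with hlast | hlast
  · -- middle square : use the L-shaped retraction
    have hb₁lt : b₁ < 1 := by
      rw [hb₁, div_lt_one hnpos]
      have : ((i+1 : ℕ) : ℝ) < (n : ℝ) := by exact_mod_cast hlast
      push_cast at this; linarith
    have hρD : ∀ z ∈ D, retL a₁ b₁ a₂ b₂ z ∈ D ∩ S := by
      intro z hz
      obtain ⟨hmem, hsh⟩ := retL_spec h0a₁ h0a₂ hlt₁.le hlt₂.le hb₁1 hb₂1 hz
      refine ⟨hmem, hsub1 _ hmem ?_⟩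
      rcases hsh with h | h
      · exact Or.inl h
      · exact Or.inr (Or.inl h)
    have hρA : ∀ z ∈ D ∩ S, retL a₁ b₁ a₂ b₂ z = z := by
      intro z hz
      apply retL_fix h0a₁ h0a₂ hlt₁.le hlt₂.le hb₁1 hb₂1 hz.1
      rcases hsub2 z hz with h | h | h
      · exact Or.inl h
      · exact Or.inr h
      · exfalso
        have := hz.1.2.1
        linarith
    obtain ⟨f', h1, h2, h3⟩ := F.step_lift hgc e he hS hD
      (retL_continuous a₁ b₁ a₂ b₂) hρD hρA hgV hfc hfp
    refine ⟨f', SFoliation.GoodLift.congr_set ⟨h1, h2, ?_⟩ hregion⟩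
    intro z hz x
    rw [h3 (z, x) ⟨hshS hz, trivial⟩]
    exact hflam z hz x
  · -- last square in the row : use the ⊔-shaped retraction
    have hb₁eq : b₁ = 1 := by
      have : i + 1 = n := le_antisymm hi hlast
      rw [hb₁, div_eq_one_iff_eq hnpos.ne']
      exact_mod_cast this
    have hρD : ∀ z ∈ D, retU a₁ b₁ a₂ b₂ z ∈ D ∩ S := by
      intro z hz
      obtain ⟨hmem, hsh⟩ := retU_spec h0a₁ h0a₂ hlt₁ hlt₂ hb₁1 hb₂1 hz
      refine ⟨hmem, hsub1 _ hmem ?_⟩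
      rcases hsh with h | h | h
      · exact Or.inl h
      · exact Or.inr (Or.inr (by rw [h, hb₁eq]))
      · exact Or.inr (Or.inl h)
    have hρA : ∀ z ∈ D ∩ S, retU a₁ b₁ a₂ b₂ z = z := by
      intro z hz
      apply retU_fix h0a₁ h0a₂ hlt₁ hlt₂ hb₁1 hb₂1 hz.1
      rcases hsub2 z hz with h | h | h
      · exact Or.inl h
      · exact Or.inr (Or.inr h)
      · exact Or.inr (Or.inl (by rw [h, hb₁eq]))
    obtain ⟨f', h1, h2, h3⟩ := F.step_lift hgc e he hS hD
      (retU_continuous a₁ b₁ a₂ b₂) hρD hρA hgV hfc hfp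
    refine ⟨f', SFoliation.GoodLift.congr_set ⟨h1, h2, ?_⟩ hregion⟩
    intro z hz x
    rw [h3 (z, x) ⟨hshS hz, trivial⟩]
    exact hflam z hz x

/-- The main square lifting lemma: a continuous family of lifts on the three sides
bottom/left/right of the square extends to a continuous family of lifts on the
whole square. -/
lemma SFoliation.lift_square {X : Type*} [TopologicalSpace X] (F : SFoliation M)
    {g : I × I → F.LeafSpace} (hgc : Continuous g)
    (hg : ∀ z : I × I, ∃ V, F.ChartAt V ∧ g z ∈ V)
    {lam : (I × I) × X → M} (hlamc : Continuous lam)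
    (hlam : ∀ z ∈ shapeU, ∀ x, F.proj (lam (z, x)) = g z) :
    ∃ f : (I × I) × X → M, Continuous f ∧ (∀ z x, F.proj (f (z, x)) = g z) ∧
      (∀ z ∈ shapeU, ∀ x, f (z, x) = lam (z, x)) := by
  classical
  choose Vz hVz hgVz using hg
  obtain ⟨δ, hδ, hball⟩ := lebesgue_number_lemma_of_metric
    (isCompact_univ : IsCompact (Set.univ : Set (I × I)))
    (fun z => (hVz z).1.preimage hgc)
    (fun z _ => Set.mem_iUnion.2 ⟨z, hgVz z⟩)
  obtain ⟨n0, hn0⟩ := exists_nat_one_div_lt hδ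
  set n : ℕ := n0 + 1 with hn
  have hn0' : 0 < n := Nat.succ_pos n0
  have hnpos : (0:ℝ) < n := by exact_mod_cast hn0'
  have hstep : (1:ℝ)/n < δ := by
    rw [hn]; push_cast; exact_mod_cast hn0
  have hsq : ∀ i j : ℕ, i < n → j < n → ∃ V, F.ChartAt V ∧
      ∀ z ∈ usq ((i:ℝ)/n) (((i:ℝ)+1)/n) ((j:ℝ)/n) (((j:ℝ)+1)/n), g z ∈ V := by
    intro i j hi hj
    have hin : ((i:ℝ)/n) ∈ Set.Icc (0:ℝ) 1 :=
      ⟨by positivity, by rw [div_le_one hnpos]; exact_mod_cast hi.le⟩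
    have hjn : ((j:ℝ)/n) ∈ Set.Icc (0:ℝ) 1 :=
      ⟨by positivity, by rw [div_le_one hnpos]; exact_mod_cast hj.le⟩
    set c : I × I := (⟨(i:ℝ)/n, hin⟩, ⟨(j:ℝ)/n, hjn⟩) with hc
    obtain ⟨w, hw⟩ := hball c trivial
    refine ⟨Vz w, hVz w, ?_⟩
    intro z hz
    have hmb : z ∈ Metric.ball c δ := by
      obtain ⟨hz1, hz2, hz3, hz4⟩ := hz
      have hstep' : (0:ℝ) < 1/n := by positivity
      rw [Metric.mem_ball, Prod.dist_eq]
      apply max_lt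
      · rw [Subtype.dist_eq, Real.dist_eq]
        show |(z.1:ℝ) - (i:ℝ)/n| < δ
        have he' : ((i:ℝ)+1)/n = (i:ℝ)/n + 1/n := by ring
        rw [he'] at hz2
        have h1 : |(z.1:ℝ) - (i:ℝ)/n| ≤ 1/n := by
          rw [abs_le]; constructor <;> linarith
        linarith
      · rw [Subtype.dist_eq, Real.dist_eq]
        show |(z.2:ℝ) - (j:ℝ)/n| < δ
        have he' : ((j:ℝ)+1)/n = (j:ℝ)/n + 1/n := by ring
        rw [he'] at hz4
        have h1 : |(z.2:ℝ) - (j:ℝ)/n| ≤ 1/n := by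
          rw [abs_le]; constructor <;> linarith
        linarith
    exact hw hmb
  -- row induction
  have row : ∀ j : ℕ, j < n → ∀ f₀, F.GoodLift g lam f₀ (botT ((j:ℝ)/n)) →
      ∀ i : ℕ, i ≤ n → ∃ f, F.GoodLift g lam f
        (botT ((j:ℝ)/n) ∪ usq 0 ((i:ℝ)/n) ((j:ℝ)/n) (((j:ℝ)+1)/n)) := by
    intro j hj f₀ hf₀ i
    induction i with
    | zero =>
      intro _
      refine ⟨f₀, hf₀.congr_set (Set.union_eq_left.2 ?_).symm⟩
      intro z hz
      have h0 : (z.1:ℝ) = 0 := le_antisymm (by simpa using hz.2.1) z.1.2.1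
      exact Or.inl (Or.inr (Or.inl h0))
    | succ i ih =>
      intro hi1
      have hi : i < n := Nat.lt_of_succ_le hi1
      obtain ⟨f, hf⟩ := ih hi.le
      obtain ⟨V, hV, hgV⟩ := hsq i j hi hj
      obtain ⟨f', hf'⟩ := F.grid_step hgc hi hj hV hgV hf
      refine ⟨f', hf'.congr_set (by push_cast; rfl)⟩
  -- column induction
  have col : ∀ j : ℕ, j ≤ n → ∃ f, F.GoodLift g lam f (botT ((j:ℝ)/n)) := by
    intro j
    induction j with
    | zero =>
      intro _
      refine ⟨lam, hlamc.continuousOn, ?_, fun _ _ _ => rfl⟩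
      intro z hz x
      apply hlam
      rcases hz with h | h
      · exact h
      · have h0 : (z.2:ℝ) = 0 := le_antisymm (by simpa using h) z.2.2.1
        exact Or.inl h0
    | succ j ih =>
      intro hj1
      have hj : j < n := Nat.lt_of_succ_le hj1
      obtain ⟨f₀, hf₀⟩ := ih hj.le
      obtain ⟨f, hf⟩ := row j hj f₀ hf₀ n le_rfl
      refine ⟨f, hf.congr_set ?_⟩
      have hnn : (n:ℝ)/n = 1 := div_self hnpos.ne'
      have hcast : ((j+1:ℕ):ℝ) = (j:ℝ)+1 := by push_cast; ring
      rw [hcast]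
      ext z
      constructor
      · rintro ((h | h) | ⟨h1, h2, h3, h4⟩)
        · exact Or.inl h
        · right
          have hmono : (j:ℝ)/n ≤ ((j:ℝ)+1)/n :=
            le_of_lt (by rw [div_lt_div_iff_of_pos_right hnpos]; linarith)
          have h' : (z.2:ℝ) ≤ (j:ℝ)/n := h
          show (z.2:ℝ) ≤ ((j:ℝ)+1)/n
          linarith
        · exact Or.inr h4
      · rintro (h | h)
        · exact Or.inl (Or.inl h)
        · rcases le_total ((z.2:ℝ)) ((j:ℝ)/n) with h' | h'
          · exact Or.inl (Or.inr h')
          · refine Or.inr ⟨z.1.2.1, ?_, h', h⟩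
            rw [hnn]
            exact z.1.2.2
  obtain ⟨f, hfc, hfp, hflam⟩ := col n le_rfl
  have huniv : botT ((n:ℝ)/n) = Set.univ := by
    rw [div_self hnpos.ne']
    exact Set.eq_univ_of_forall fun z => Or.inr z.2.2.2
  refine ⟨f, ?_, fun z x => hfp z (huniv ▸ Set.mem_univ z) x, hflam⟩
  rw [huniv, Set.univ_prod_univ] at hfc
  exact continuousOn_univ.1 hfc

end GridLemmas

/-- Let `(M, F)` be a singular Riemannian foliation with closed leaves on
a compact, simply-connected Riemannian manifold, and assume the principal part `M*_prin`
of the leaf space is simply-connected.  Fix principal leaves `L₀` and `L` of `F` and two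
paths `γ₀, γ₁ : I → M*_prin` connecting `L₀*` to `L*`.  Then the homeomorphism
`h_{γ₀} : L₀ → L` (induced by horizontal lifts of `γ₀`) is homotopic to the homeomorphism
`h_{γ₁} : L₀ → L` (induced by horizontal lifts of `γ₁`). -/
theorem lift_homeos_homotopic
    {M : Type*} [TopologicalSpace M] [CompactSpace M] [SimplyConnectedSpace M]
    (F : SFoliation M)
    (hclosed : ∀ p : M, IsClosed (F.leaf p))
    (hsc : SimplyConnectedSpace ↥(F.proj '' F.Mprin))
    {p₀ l : M} (hp₀ : F.IsPrincipal p₀) (hl : F.IsPrincipal l)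
    {a b : ↥(F.proj '' F.Mprin)}
    (ha : (a : F.LeafSpace) = F.proj p₀) (hb : (b : F.LeafSpace) = F.proj l)
    (γ₀ γ₁ : Path a b)
    (h₀ h₁ : ↥(F.leaf p₀) ≃ₜ ↥(F.leaf l))
    (hh₀ : F.InducedByLift γ₀ ((F.leafIncl l).comp (h₀ : C(↥(F.leaf p₀), ↥(F.leaf l)))))
    (hh₁ : F.InducedByLift γ₁ ((F.leafIncl l).comp (h₁ : C(↥(F.leaf p₀), ↥(F.leaf l))))) :
    ContinuousMap.Homotopic (h₀ : C(↥(F.leaf p₀), ↥(F.leaf l))) (h₁ : C(↥(F.leaf p₀), ↥(F.leaf l))) := by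
  classical
  obtain ⟨δ₀, hδ₀c, hδ₀0, hδ₀1, hδ₀p⟩ := hh₀
  obtain ⟨δ₁, hδ₁c, hδ₁0, hδ₁1, hδ₁p⟩ := hh₁
  haveI := hsc
  obtain ⟨H⟩ : Path.Homotopic γ₀ γ₁ := SimplyConnectedSpace.paths_homotopic γ₀ γ₁
  set g : I × I → F.LeafSpace := fun z => ((H z : ↥(F.proj '' F.Mprin)) : F.LeafSpace)
    with hgdef
  have hgc : Continuous g := continuous_subtype_val.comp H.continuous
  have hcharts : ∀ z : I × I, ∃ V, F.ChartAt V ∧ g z ∈ V := fun z =>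
    F.exists_chart (H z).2
  have hmIval : ∀ z : I × I, (z.2:ℝ) * |2*(z.1:ℝ) - 1| ∈ Set.Icc (0:ℝ) 1 := by
    intro z
    constructor
    · exact mul_nonneg z.2.2.1 (abs_nonneg _)
    · have h1 : |2*(z.1:ℝ) - 1| ≤ 1 := abs_le.2 ⟨by linarith [z.1.2.1], by linarith [z.1.2.2]⟩
      have h2 : (z.2:ℝ) ≤ 1 := z.2.2.2
      have h3 : (0:ℝ) ≤ (z.2:ℝ) := z.2.2.1
      nlinarith
  set mI : I × I → I := fun z => ⟨(z.2:ℝ) * |2*(z.1:ℝ) - 1|, hmIval z⟩ with hmI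
  have hmIc : Continuous mI :=
    Continuous.subtype_mk (cont_c2.mul ((continuous_const.mul cont_c1).sub continuous_const).abs) _
  have hmI0 : ∀ z : I × I, (z.2:ℝ) = 0 → mI z = 0 := by
    intro z h
    apply Subtype.ext
    show (z.2:ℝ) * |2*(z.1:ℝ) - 1| = 0
    rw [h, zero_mul]
  have hmIL : ∀ z : I × I, (z.1:ℝ) = 0 → mI z = z.2 := by
    intro z h
    apply Subtype.ext
    show (z.2:ℝ) * |2*(z.1:ℝ) - 1| = (z.2:ℝ)
    rw [h]; norm_num
  have hmIR : ∀ z : I × I, (z.1:ℝ) = 1 → mI z = z.2 := by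
    intro z h
    apply Subtype.ext
    show (z.2:ℝ) * |2*(z.1:ℝ) - 1| = (z.2:ℝ)
    rw [h]; norm_num
  have hmIhalf : ∀ z : I × I, (z.1:ℝ) = 1/2 → mI z = 0 := by
    intro z h
    apply Subtype.ext
    show (z.2:ℝ) * |2*(z.1:ℝ) - 1| = 0
    rw [h]; norm_num
  set lam : (I × I) × ↥(F.leaf p₀) → M := fun p =>
    if (p.1.1:ℝ) ≤ 1/2 then δ₀ p.2 (mI p.1) else δ₁ p.2 (mI p.1) with hlamdef
  have hlamc : Continuous lam := by
    apply Continuous.if_le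
    · exact hδ₀c.comp (continuous_snd.prodMk (hmIc.comp continuous_fst))
    · exact hδ₁c.comp (continuous_snd.prodMk (hmIc.comp continuous_fst))
    · exact cont_c1.comp continuous_fst
    · exact continuous_const
    · intro p hp
      rw [hmIhalf p.1 hp, hδ₀0, hδ₁0]
  have hlamproj : ∀ z ∈ shapeU, ∀ x : ↥(F.leaf p₀), F.proj (lam (z, x)) = g z := by
    intro z hz x
    rcases hz with h | h | h
    · -- bottom edge
      have hz2 : z.2 = (0:I) := Subtype.ext h
      have hgz : g z = (a : F.LeafSpace) := by
        show ((H z : ↥(F.proj '' F.Mprin)) : F.LeafSpace) = ↑a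
        have hzz : z = (z.1, (0:I)) := by rw [← hz2]
        have h1 : H (z.1, (0:I)) = γ₀ 0 := H.eq_fst z.1 (Set.mem_insert _ _)
        rw [hzz, h1, γ₀.source]
      have hlz : lam (z, x) = (x : M) := by
        rw [hlamdef]
        by_cases hc : (z.1:ℝ) ≤ 1/2
        · simp only [if_pos hc]
          rw [hmI0 z h, hδ₀0]
        · simp only [if_neg hc]
          rw [hmI0 z h, hδ₁0]
      rw [hlz, hgz, ha]
      exact (F.proj_eq_of_rel x.2).symm
    · -- left edge
      have hz1 : z.1 = (0:I) := Subtype.ext h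
      have hcond : (z.1:ℝ) ≤ 1/2 := by rw [h]; norm_num
      have hlz : lam (z, x) = δ₀ x z.2 := by
        rw [hlamdef]
        simp only [if_pos hcond]
        rw [hmIL z h]
      rw [hlz, hδ₀p x z.2]
      show ((γ₀ z.2 : ↥(F.proj '' F.Mprin)) : F.LeafSpace) = _
      have hzz : z = ((0:I), z.2) := by rw [← hz1]
      have h1 : H ((0:I), z.2) = γ₀ z.2 := H.apply_zero z.2
      show _ = ((H z : ↥(F.proj '' F.Mprin)) : F.LeafSpace)
      rw [hzz, h1]
    · -- right edge
      have hz1 : z.1 = (1:I) := Subtype.ext h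
      have hcond : ¬ ((z.1:ℝ) ≤ 1/2) := by rw [h]; norm_num
      have hlz : lam (z, x) = δ₁ x z.2 := by
        rw [hlamdef]
        simp only [if_neg hcond]
        rw [hmIR z h]
      rw [hlz, hδ₁p x z.2]
      show ((γ₁ z.2 : ↥(F.proj '' F.Mprin)) : F.LeafSpace) = _
      have hzz : z = ((1:I), z.2) := by rw [← hz1]
      have h1 : H ((1:I), z.2) = γ₁ z.2 := H.apply_one z.2
      show _ = ((H z : ↥(F.proj '' F.Mprin)) : F.LeafSpace)
      rw [hzz, h1]
  obtain ⟨f, hfc, hfp, hflam⟩ := F.lift_square hgc hcharts hlamc hlamproj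
  have htop : ∀ (s : I) (x : ↥(F.leaf p₀)), f ((s, 1), x) ∈ F.leaf l := by
    intro s x
    have h1 : F.proj (f ((s, 1), x)) = g (s, 1) := hfp (s, 1) x
    have h2 : g (s, (1:I)) = (b : F.LeafSpace) := by
      show ((H (s, (1:I)) : ↥(F.proj '' F.Mprin)) : F.LeafSpace) = ↑b
      have h3 : H (s, (1:I)) = γ₀ 1 := H.eq_fst s (Set.mem_insert_of_mem _ rfl)
      rw [h3, γ₀.target]
    show F.rel l _
    apply F.rel_of_proj_eq
    rw [h1, h2, ← hb]
  refine ⟨{ toFun := fun p => ⟨f ((p.1, 1), p.2), htop p.1 p.2⟩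
            continuous_toFun := ?_
            map_zero_left := ?_
            map_one_left := ?_ }⟩
  · apply Continuous.subtype_mk
    exact hfc.comp ((continuous_fst.prodMk continuous_const).prodMk continuous_snd)
  · intro x
    apply Subtype.ext
    show f (((0:I), (1:I)), x) = _
    have hsh : ((0:I), (1:I)) ∈ shapeU := Or.inr (Or.inl rfl)
    rw [hflam _ hsh x]
    have hcond : ((((0:I), (1:I)).1 : I) : ℝ) ≤ 1/2 := by norm_num
    rw [hlamdef]
    simp only [if_pos hcond]
    rw [hmIL ((0:I), (1:I)) rfl, hδ₀1]
    rfl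
  · intro x
    apply Subtype.ext
    show f (((1:I), (1:I)), x) = _
    have hsh : ((1:I), (1:I)) ∈ shapeU := Or.inr (Or.inr rfl)
    rw [hflam _ hsh x]
    have hcond : ¬ (((((1:I), (1:I)).1 : I) : ℝ) ≤ 1/2) := by norm_num
    rw [hlamdef]
    simp only [if_neg hcond]
    rw [hmIR ((1:I), (1:I)) rfl, hδ₁1]
    rfl
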